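/- If two finite pointed graphs (G,w) and (G',u) are distinguished by the Weisfeiler-Leman algorithm at round t (i.e., WL^t(G,w) ≠ WL^t(G',u) running WL on the disjoint union), then there exists a graded modal logic formula φ of modal depth at most t (over empty proposition vocabulary, single modality) such that (G,w) ⊨ φ and (G',u) ⊭ φ. -/

import Mathlib

/-- Syntax of graded multimodal logic over propositions `P` and indices `I`. -/
inductive GMML (P : Type) (I : Type) : Type
  | top : GMML P I
  | prop : P → GMML P I
  | neg : GMML P I → GMML P I
  | and : GMML P I → GMML P I → GMML P I
  | dia : I → ℕ → GMML P I → GMML P I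

/-- Satisfaction of a GMML formula at a point of a Kripke model. -/
def GMML.Sat {P I W : Type} (R : I → W → W → Prop) (V : P → W → Prop) :
    W → GMML P I → Prop
  | _, .top => True
  | w, .prop p => V p w
  | w, .neg φ => ¬ GMML.Sat R V w φ
  | w, .and φ ψ => GMML.Sat R V w φ ∧ GMML.Sat R V w ψ
  | w, .dia α k φ => k ≤ {v | R α w v ∧ GMML.Sat R V v φ}.ncard

/-- Modal depth of a GMML formula. -/
def GMML.md {P I : Type} : GMML P I → ℕ
  | .top => 0
  | .prop _ => 0
  | .neg φ => φ.md
  | .and φ ψ => max φ.md ψ.md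
  | .dia _ _ φ => φ.md + 1

/-- A finite pointed Kripke model of vocabulary `(P, I)`. -/
structure PKModel (P I : Type) where
  W : Type
  fin : Finite W
  R : I → W → W → Prop
  V : P → W → Prop
  pt : W

/-- Satisfaction at the distinguished point of a pointed model. -/
def PKModel.Sat {P I : Type} (M : PKModel P I) (φ : GMML P I) : Prop :=
  GMML.Sat M.R M.V M.pt φ

/-- The Weisfeiler-Leman equivalences `≈_t`: `≈_0` relates everything, and
`a ≈_{t+1} b` iff `a ≈_t b` and for every `≈_t`-equivalence class `C`, `a` and `b`
have equally many `E`-neighbors in `C`. -/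
def WLrel {V : Type} (E : V → V → Prop) : ℕ → V → V → Prop
  | 0 => fun _ _ => True
  | t + 1 => fun a b => WLrel E t a b ∧
      ∀ C : Set V, (∀ x ∈ C, ∀ y, y ∈ C ↔ WLrel E t x y) →
        {a' | E a a' ∧ a' ∈ C}.ncard = {b' | E b b' ∧ b' ∈ C}.ncard

/-- The edge relation of the disjoint union of two graphs. -/
def sumE {V1 V2 : Type} (E1 : V1 → V1 → Prop) (E2 : V2 → V2 → Prop) :
    V1 ⊕ V2 → V1 ⊕ V2 → Prop
  | .inl a, .inl b => E1 a b
  | .inr a, .inr b => E2 a b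
  | _, _ => False

/-! ### Auxiliary development -/

/-- Satisfaction over the empty proposition vocabulary and a single modality. -/
def satE {V : Type} (E : V → V → Prop) (w : V) (φ : GMML Empty Unit) : Prop :=
  GMML.Sat (fun _ => E) (fun p _ => p.elim) w φ

lemma wl_refl {V : Type} (E : V → V → Prop) : ∀ t (x : V), WLrel E t x x := by
  intro t
  induction t with
  | zero => intro x; trivial
  | succ t ih => exact fun x => ⟨ih x, fun C _ => rfl⟩

lemma wl_symm {V : Type} (E : V → V → Prop) :
    ∀ t {x y : V}, WLrel E t x y → WLrel E t y x := by
  intro t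
  induction t with
  | zero => intro x y _; trivial
  | succ t ih => exact fun h => ⟨ih h.1, fun C hC => (h.2 C hC).symm⟩

lemma wl_trans {V : Type} (E : V → V → Prop) :
    ∀ t {x y z : V}, WLrel E t x y → WLrel E t y z → WLrel E t x z := by
  intro t
  induction t with
  | zero => intro x y z _ _; trivial
  | succ t ih =>
      exact fun h1 h2 => ⟨ih h1.1 h2.1, fun C hC => (h1.2 C hC).trans (h2.2 C hC)⟩

lemma ncard_filter {V : Type} [Fintype V] (p : V → Prop) [DecidablePred p] :
    {a | p a}.ncard = (Finset.univ.filter p).card := by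
  rw [← Set.ncard_coe_finset]
  congr 1
  ext a
  simp

/-- Neighbor counts agree on any `WLrel t`-closed set, for `WLrel (t+1)`-related points. -/
lemma count_eq {V : Type} [Fintype V] (E : V → V → Prop) (t : ℕ) {x y : V}
    (h : WLrel E (t + 1) x y) (S : Set V)
    (hS : ∀ a ∈ S, ∀ b, WLrel E t a b → b ∈ S) :
    {a | E x a ∧ a ∈ S}.ncard = {b | E y b ∧ b ∈ S}.ncard := by
  classical
  let s : Setoid V := ⟨WLrel E t, ⟨wl_refl E t, fun h => wl_symm E t h,
    fun h1 h2 => wl_trans E t h1 h2⟩⟩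
  rw [ncard_filter, ncard_filter]
  rw [Finset.card_eq_sum_card_fiberwise
      (f := fun a => Quotient.mk s a) (t := Finset.univ) (fun a _ => Finset.mem_univ _),
    Finset.card_eq_sum_card_fiberwise
      (f := fun a => Quotient.mk s a) (t := Finset.univ) (fun a _ => Finset.mem_univ _)]
  apply Finset.sum_congr rfl
  intro q _
  obtain ⟨z, hz⟩ := Quotient.exists_rep q
  have hq : ∀ a : V, Quotient.mk s a = q ↔ WLrel E t z a := by
    intro a
    rw [← hz]
    constructor
    · intro h'; exact wl_symm E t (Quotient.exact h')
    · intro h'; exact Quotient.sound (wl_symm E t h')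
  by_cases hzS : z ∈ S
  · have hx : (Finset.univ.filter fun a => E x a ∧ a ∈ S).filter
        (fun a => Quotient.mk s a = q) =
        Finset.univ.filter (fun a => E x a ∧ WLrel E t z a) := by
      ext a
      simp only [Finset.mem_filter, Finset.mem_univ, true_and, hq]
      constructor
      · rintro ⟨⟨h1, _⟩, h3⟩; exact ⟨h1, h3⟩
      · rintro ⟨h1, h3⟩; exact ⟨⟨h1, hS z hzS a h3⟩, h3⟩
    have hy : (Finset.univ.filter fun a => E y a ∧ a ∈ S).filter
        (fun a => Quotient.mk s a = q) =
        Finset.univ.filter (fun a => E y a ∧ WLrel E t z a) := by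
      ext a
      simp only [Finset.mem_filter, Finset.mem_univ, true_and, hq]
      constructor
      · rintro ⟨⟨h1, _⟩, h3⟩; exact ⟨h1, h3⟩
      · rintro ⟨h1, h3⟩; exact ⟨⟨h1, hS z hzS a h3⟩, h3⟩
    rw [hx, hy, ← ncard_filter, ← ncard_filter]
    apply h.2
    intro x0 hx0 y0
    constructor
    · intro hy0; exact wl_trans E t (wl_symm E t hx0) hy0
    · intro hy0; exact wl_trans E t hx0 hy0
  · have hempty : ∀ w' : V, (Finset.univ.filter fun a => E w' a ∧ a ∈ S).filter
        (fun a => Quotient.mk s a = q) = ∅ := by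
      intro w'
      rw [Finset.filter_eq_empty_iff]
      intro a ha
      simp only [Finset.mem_filter, Finset.mem_univ, true_and] at ha
      rw [hq]
      intro h'
      exact hzS (hS a ha.2 z (wl_symm E t h'))
    rw [hempty x, hempty y]

/-- `WLrel t` preserves satisfaction of formulas of modal depth ≤ t. -/
lemma wl_to_gml {V : Type} [Fintype V] (E : V → V → Prop) :
    ∀ t {x y : V}, WLrel E t x y →
      ∀ φ : GMML Empty Unit, φ.md ≤ t → (satE E x φ ↔ satE E y φ) := by
  intro t
  induction t with
  | zero =>
      intro x y _ φ
      induction φ with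
      | top => intro _; simp [satE, GMML.Sat]
      | prop p => exact p.elim
      | neg ψ ihψ =>
          intro h
          have := ihψ h
          simp only [satE, GMML.Sat] at this ⊢
          tauto
      | and ψ χ ihψ ihχ =>
          intro h
          simp only [GMML.md, max_le_iff] at h
          have h1 := ihψ h.1
          have h2 := ihχ h.2
          simp only [satE, GMML.Sat] at h1 h2 ⊢
          tauto
      | dia α k ψ ihψ => intro h; exact absurd h (Nat.not_succ_le_zero _)
  | succ t ih =>
      intro x y hxy φ
      induction φ with
      | top => intro _; simp [satE, GMML.Sat]
      | prop p => exact p.elim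
      | neg ψ ihψ =>
          intro h
          have := ihψ h
          simp only [satE, GMML.Sat] at this ⊢
          tauto
      | and ψ χ ihψ ihχ =>
          intro h
          simp only [GMML.md, max_le_iff] at h
          have h1 := ihψ h.1
          have h2 := ihχ h.2
          simp only [satE, GMML.Sat] at h1 h2 ⊢
          tauto
      | dia α k ψ ihψ =>
          intro h
          have hmd : ψ.md ≤ t := Nat.succ_le_succ_iff.mp h
          have hcl : ∀ a ∈ {z : V | satE E z ψ}, ∀ b, WLrel E t a b →
              b ∈ {z : V | satE E z ψ} := by
            intro a ha b hab
            exact (ih hab ψ hmd).mp ha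
          have hcount := count_eq E t hxy {z : V | satE E z ψ} hcl
          simp only [satE, GMML.Sat]
          have hx : {v | E x v ∧ GMML.Sat (fun _ => E) (fun p _ => p.elim) v ψ} =
              {a | E x a ∧ a ∈ {z : V | satE E z ψ}} := rfl
          have hy : {v | E y v ∧ GMML.Sat (fun _ => E) (fun p _ => p.elim) v ψ} =
              {a | E y a ∧ a ∈ {z : V | satE E z ψ}} := rfl
          rw [hx, hy, hcount]

lemma sat_foldr {V : Type} (E : V → V → Prop) (a : V) :
    ∀ L : List (GMML Empty Unit),
      satE E a (L.foldr GMML.and GMML.top) ↔ ∀ φ ∈ L, satE E a φ := by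
  intro L
  induction L with
  | nil => simp [satE, GMML.Sat]
  | cons φ L ih =>
      simp only [List.foldr_cons, List.mem_cons]
      constructor
      · intro h ψ hψ
        rcases hψ with rfl | hψ
        · exact h.1
        · exact ih.mp h.2 ψ hψ
      · intro h
        exact ⟨h _ (Or.inl rfl), ih.mpr fun ψ hψ => h ψ (Or.inr hψ)⟩

lemma md_foldr {n : ℕ} :
    ∀ L : List (GMML Empty Unit), (∀ φ ∈ L, φ.md ≤ n) →
      (L.foldr GMML.and GMML.top).md ≤ n := by
  intro L
  induction L with
  | nil => intro _; simp [GMML.md]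
  | cons φ L ih =>
      intro h
      simp only [List.foldr_cons, GMML.md, max_le_iff]
      exact ⟨h φ List.mem_cons_self, ih fun ψ hψ => h ψ (List.mem_cons_of_mem _ hψ)⟩

/-- GML-equivalence at depth ≤ t implies `WLrel t`. -/
lemma gml_to_wl {V : Type} [Fintype V] (E : V → V → Prop) :
    ∀ t (x y : V),
      (∀ φ : GMML Empty Unit, φ.md ≤ t → (satE E x φ ↔ satE E y φ)) →
      WLrel E t x y := by
  intro t
  induction t with
  | zero => intro x y _; trivial
  | succ t ih =>
      intro x y hall
      refine ⟨ih x y fun φ hφ => hall φ (hφ.trans (Nat.le_succ t)), ?_⟩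
      intro C hC
      by_cases hCne : C.Nonempty
      · obtain ⟨x0, hx0⟩ := hCne
        have hmem : ∀ z, z ∈ C ↔ WLrel E t x0 z := hC x0 hx0
        have hex : ∀ z : V, ∃ φ : GMML Empty Unit, φ.md ≤ t ∧ satE E x0 φ ∧
            (¬ WLrel E t x0 z → ¬ satE E z φ) := by
          intro z
          by_cases hz : WLrel E t x0 z
          · exact ⟨.top, by simp [GMML.md], by simp [satE, GMML.Sat],
              fun h => absurd hz h⟩
          · have hni := mt (ih x0 z) hz
            push_neg at hni
            obtain ⟨φ, hφmd, hφ⟩ := hni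
            rcases hφ with ⟨h1, h2⟩ | ⟨h1, h2⟩
            · exact ⟨φ, hφmd, h1, fun _ => h2⟩
            · exact ⟨φ.neg, hφmd, h1, fun _ hzn => hzn h2⟩
        choose ψ hmd hx0s hzs using hex
        classical
        set L : List (GMML Empty Unit) := Finset.univ.toList.map ψ with hL
        set χ : GMML Empty Unit := L.foldr GMML.and GMML.top with hχdef
        have hχmd : χ.md ≤ t := by
          apply md_foldr
          intro φ hφ
          rw [hL] at hφ
          simp only [List.mem_map] at hφ
          obtain ⟨z, _, rfl⟩ := hφ
          exact hmd z
        have hsatχ : ∀ a, satE E a χ ↔ ∀ z : V, satE E a (ψ z) := by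
          intro a
          rw [hχdef, sat_foldr]
          constructor
          · intro h z
            refine h (ψ z) ?_
            rw [hL]
            simp only [List.mem_map]
            exact ⟨z, Finset.mem_toList.mpr (Finset.mem_univ z), rfl⟩
          · intro h φ hφ
            rw [hL] at hφ
            simp only [List.mem_map] at hφ
            obtain ⟨z, _, rfl⟩ := hφ
            exact h z
        have hχ : ∀ a, satE E a χ ↔ WLrel E t x0 a := by
          intro a
          rw [hsatχ]
          constructor
          · intro h
            by_contra hn
            exact hzs a hn (h a)
          · intro h z
            exact (wl_to_gml E t h (ψ z) (hmd z)).mp (hx0s z)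
        have hsetx : {v | E x v ∧ satE E v χ} = {a | E x a ∧ a ∈ C} := by
          ext v; simp only [Set.mem_setOf_eq, hχ, hmem]
        have hsety : {v | E y v ∧ satE E v χ} = {a | E y a ∧ a ∈ C} := by
          ext v; simp only [Set.mem_setOf_eq, hχ, hmem]
        set n := {a | E x a ∧ a ∈ C}.ncard with hn
        have h1 : satE E x (GMML.dia () n χ) := by
          show n ≤ {v | E x v ∧ satE E v χ}.ncard
          rw [hsetx]
        have h2 := (hall (GMML.dia () n χ)
          (by simpa [GMML.md] using Nat.succ_le_succ hχmd)).mp h1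
        have h3 : satE E x (GMML.neg (GMML.dia () (n + 1) χ)) := by
          show ¬ (n + 1 ≤ {v | E x v ∧ satE E v χ}.ncard)
          rw [hsetx]
          omega
        have h4 := (hall (GMML.neg (GMML.dia () (n + 1) χ))
          (by simpa [GMML.md] using Nat.succ_le_succ hχmd)).mp h3
        have h2' : n ≤ {v | E y v ∧ satE E v χ}.ncard := h2
        have h4' : ¬ (n + 1 ≤ {v | E y v ∧ satE E v χ}.ncard) := h4
        rw [hsety] at h2' h4'
        omega
      · rw [Set.not_nonempty_iff_eq_empty] at hCne
        subst hCne
        simp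

lemma sat_inl {V1 V2 : Type} (E1 : V1 → V1 → Prop) (E2 : V2 → V2 → Prop) :
    ∀ (φ : GMML Empty Unit) (w : V1),
      satE (sumE E1 E2) (Sum.inl w) φ ↔ satE E1 w φ := by
  intro φ
  induction φ with
  | top => intro w; simp [satE, GMML.Sat]
  | prop p => exact p.elim
  | neg ψ ih =>
      intro w
      have := ih w
      simp only [satE, GMML.Sat] at this ⊢
      tauto
  | and ψ χ ihψ ihχ =>
      intro w
      have h1 := ihψ w
      have h2 := ihχ w
      simp only [satE, GMML.Sat] at h1 h2 ⊢
      tauto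
  | dia α k ψ ih =>
      intro w
      show (k ≤ _) ↔ (k ≤ _)
      have hset : {v | sumE E1 E2 (Sum.inl w) v ∧
          GMML.Sat (fun _ => sumE E1 E2) (fun p _ => p.elim) v ψ} =
          Sum.inl '' {v | E1 w v ∧ GMML.Sat (fun _ => E1) (fun p _ => p.elim) v ψ} := by
        ext v
        cases v with
        | inl a =>
            have := ih a
            simp only [satE] at this
            simp [sumE, this, Set.mem_image]
        | inr b => simp [sumE]
      rw [hset, Set.ncard_image_of_injective _ Sum.inl_injective]

lemma sat_inr {V1 V2 : Type} (E1 : V1 → V1 → Prop) (E2 : V2 → V2 → Prop) :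
    ∀ (φ : GMML Empty Unit) (u : V2),
      satE (sumE E1 E2) (Sum.inr u) φ ↔ satE E2 u φ := by
  intro φ
  induction φ with
  | top => intro u; simp [satE, GMML.Sat]
  | prop p => exact p.elim
  | neg ψ ih =>
      intro u
      have := ih u
      simp only [satE, GMML.Sat] at this ⊢
      tauto
  | and ψ χ ihψ ihχ =>
      intro u
      have h1 := ihψ u
      have h2 := ihχ u
      simp only [satE, GMML.Sat] at h1 h2 ⊢
      tauto
  | dia α k ψ ih =>
      intro u
      show (k ≤ _) ↔ (k ≤ _)
      have hset : {v | sumE E1 E2 (Sum.inr u) v ∧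
          GMML.Sat (fun _ => sumE E1 E2) (fun p _ => p.elim) v ψ} =
          Sum.inr '' {v | E2 u v ∧ GMML.Sat (fun _ => E2) (fun p _ => p.elim) v ψ} := by
        ext v
        cases v with
        | inl a => simp [sumE]
        | inr b =>
            have := ih b
            simp only [satE] at this
            simp [sumE, this, Set.mem_image]
      rw [hset, Set.ncard_image_of_injective _ Sum.inr_injective]


/-- if the Weisfeiler-Leman algorithm distinguishes two finite pointed
graphs at round `t` (running on their disjoint union), then some graded modal formula
(empty proposition vocabulary, single modality) of modal depth at most `t` is true at
the first point and false at the second. -/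
theorem WL_distinguishes_implies_GML_formula {V1 V2 : Type}
    [Fintype V1] [Fintype V2] (E1 : V1 → V1 → Prop) (E2 : V2 → V2 → Prop)
    (w : V1) (u : V2) (t : ℕ)
    (h : ¬ WLrel (sumE E1 E2) t (.inl w) (.inr u)) :
    ∃ φ : GMML Empty Unit, φ.md ≤ t ∧
      GMML.Sat (fun _ => E1) (fun p _ => p.elim) w φ ∧
      ¬ GMML.Sat (fun _ => E2) (fun p _ => p.elim) u φ := by
  have hni := mt (gml_to_wl (sumE E1 E2) t (Sum.inl w) (Sum.inr u)) h
  push_neg at hni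
  obtain ⟨φ, hmd, hne⟩ := hni
  rcases hne with ⟨hw, hu⟩ | ⟨hw, hu⟩
  · refine ⟨φ, hmd, (sat_inl E1 E2 φ w).mp hw, ?_⟩
    intro hc
    exact hu ((sat_inr E1 E2 φ u).mpr hc)
  · refine ⟨φ.neg, hmd, ?_, ?_⟩
    · intro hc
      exact hw ((sat_inl E1 E2 φ w).mpr hc)
    · intro hc
      exact hc ((sat_inr E1 E2 φ u).mp hu)
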